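/- If (a,b,c) is a primitive solution of a² + 6b² = c² and p is a prime dividing c, then there exist integers u, v with p = u² + 6v² or 2p = u² + 6v². -/

import Mathlib

-- Thue's lemma style result
lemma thue6 (p : ℕ) (hp : Nat.Prime p) (t : ZMod p) :
    ∃ x y : ℤ, ((x : ZMod p) = t * y) ∧ (x ≠ 0 ∨ y ≠ 0) ∧ x^2 < p ∧ y^2 < p := by
  haveI := Fact.mk hp
  set s := Nat.sqrt p with hs
  have hsp : s * s < p := by
    refine lt_of_le_of_ne (Nat.sqrt_le p) ?_
    intro hsq
    have hdvd : s ∣ p := ⟨s, hsq.symm⟩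
    rcases (hp.eq_one_or_self_of_dvd s hdvd) with h1 | h1
    · rw [h1] at hsq; have := hp.one_lt; omega
    · rw [h1] at hsq; have := hp.one_lt; nlinarith
  have hcard : (Finset.univ : Finset (ZMod p)).card
      < ((Finset.range (s+1)) ×ˢ (Finset.range (s+1))).card := by
    rw [Finset.card_univ, ZMod.card, Finset.card_product, Finset.card_range]
    have := Nat.lt_succ_sqrt p
    simpa [hs] using this
  obtain ⟨q1, hq1, q2, hq2, hne, heq⟩ :=
    Finset.exists_ne_map_eq_of_card_lt_of_maps_to hcard
      (f := fun q : ℕ × ℕ => (q.1 : ZMod p) - t * q.2)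
      (fun a _ => Finset.mem_univ _)
  obtain ⟨i1, j1⟩ := q1
  obtain ⟨i2, j2⟩ := q2
  simp only [Finset.mem_product, Finset.mem_range] at hq1 hq2
  refine ⟨(i1 : ℤ) - i2, (j1 : ℤ) - j2, ?_, ?_, ?_, ?_⟩
  · push_cast
    simp only at heq
    linear_combination heq
  · have : ¬(i1 = i2 ∧ j1 = j2) := by
      intro ⟨h1, h2⟩; exact hne (by simp [Prod.ext_iff, h1, h2])
    omega
  · have h1 : (i1 : ℤ) - i2 ≤ s := by omega
    have h2 : -(s : ℤ) ≤ (i1 : ℤ) - i2 := by omega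
    have := sq_le_sq' h2 h1
    have hsp' : ((s : ℤ))^2 < p := by exact_mod_cast (by nlinarith : s^2 < p)
    linarith
  · have h1 : (j1 : ℤ) - j2 ≤ s := by omega
    have h2 : -(s : ℤ) ≤ (j1 : ℤ) - j2 := by omega
    have := sq_le_sq' h2 h1
    have hsp' : ((s : ℤ))^2 < p := by exact_mod_cast (by nlinarith : s^2 < p)
    linarith

lemma descend6 (p : ℕ) (hp : Nat.Prime p) (x y k : ℤ) (hk1 : 1 ≤ k) (hk6 : k ≤ 6)
    (hxy : x^2 + 6*y^2 = k * p) :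
    ∃ u v : ℤ, (p : ℤ) = u^2 + 6*v^2 ∨ 2*(p : ℤ) = u^2 + 6*v^2 := by
  interval_cases k
  · exact ⟨x, y, Or.inl (by linarith)⟩
  · exact ⟨x, y, Or.inr (by linarith)⟩
  · -- k = 3
    have h3 : (3:ℤ) ∣ x := by
      refine Int.prime_three.dvd_of_dvd_pow (n := 2) ⟨p - 2*y^2, by linarith⟩
    obtain ⟨w, rfl⟩ := h3
    exact ⟨2*y, w, Or.inr (by nlinarith)⟩
  · -- k = 4
    have h2 : (2:ℤ) ∣ x := by
      refine Int.prime_two.dvd_of_dvd_pow (n := 2) ⟨2*p - 3*y^2, by linarith⟩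
    obtain ⟨w, rfl⟩ := h2
    have h2y : (2:ℤ) ∣ y := by
      refine Int.prime_two.dvd_of_dvd_pow (n := 2) ?_
      have h23 : (2:ℤ) ∣ 3 * y^2 := ⟨p - w^2, by nlinarith⟩
      rcases (Int.prime_two.dvd_mul.mp h23) with h | h
      · norm_num at h
      · exact h
    obtain ⟨z, rfl⟩ := h2y
    exact ⟨w, z, Or.inl (by nlinarith)⟩
  · -- k = 5
    have h50 : (5 : ZMod 5) = 0 := by decide
    have hmod : ((x : ZMod 5))^2 + (y : ZMod 5)^2 = 0 := by
      have hc := congrArg (fun z : ℤ => (z : ZMod 5)) hxy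
      push_cast at hc
      linear_combination hc + ((p : ZMod 5) - (y : ZMod 5)^2) * h50
    have hcases := (by decide : ∀ u v : ZMod 5, u^2 + v^2 = 0 →
      (u = 0 ∧ v = 0) ∨ u = 2*v ∨ u = 3*v) _ _ hmod
    rcases hcases with ⟨hx5, hy5⟩ | hx2 | hx3
    · -- 5 ∣ x, 5 ∣ y, hence p = 5
      obtain ⟨x', rfl⟩ := (ZMod.intCast_zmod_eq_zero_iff_dvd x 5).mp hx5
      obtain ⟨y', rfl⟩ := (ZMod.intCast_zmod_eq_zero_iff_dvd y 5).mp hy5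
      push_cast at hxy
      have h5p : (5:ℤ) ∣ (p:ℤ) := ⟨x'^2 + 6*y'^2, by nlinarith⟩
      have h5pn : (5:ℕ) ∣ p := by exact_mod_cast h5p
      rcases hp.eq_one_or_self_of_dvd 5 h5pn with h | h
      · omega
      · exact ⟨2, 1, Or.inr (by rw [← h]; norm_num)⟩
    · -- x ≡ 2y mod 5
      have hX : ((5:ℕ):ℤ) ∣ 2*x + 6*y := by
        apply (ZMod.intCast_zmod_eq_zero_iff_dvd _ 5).mp
        push_cast
        linear_combination 2 * hx2 + 2 * (y : ZMod 5) * h50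
      have hY : ((5:ℕ):ℤ) ∣ x - 2*y := by
        apply (ZMod.intCast_zmod_eq_zero_iff_dvd _ 5).mp
        push_cast
        linear_combination hx2
      obtain ⟨u, hu⟩ := hX
      obtain ⟨v, hv⟩ := hY
      push_cast at hu hv
      refine ⟨u, v, Or.inr ?_⟩
      have h25 : 25 * (2*(p:ℤ)) = 25 * (u^2 + 6*v^2) := by
        linear_combination (2*x+6*y+5*u)*hu + 6*(x-2*y+5*v)*hv - 10*hxy
      linarith
    · -- x ≡ 3y mod 5
      have hX : ((5:ℕ):ℤ) ∣ 2*x - 6*y := by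
        apply (ZMod.intCast_zmod_eq_zero_iff_dvd _ 5).mp
        push_cast
        linear_combination 2 * hx3
      have hY : ((5:ℕ):ℤ) ∣ x + 2*y := by
        apply (ZMod.intCast_zmod_eq_zero_iff_dvd _ 5).mp
        push_cast
        linear_combination hx3 + (y : ZMod 5) * h50
      obtain ⟨u, hu⟩ := hX
      obtain ⟨v, hv⟩ := hY
      push_cast at hu hv
      refine ⟨u, v, Or.inr ?_⟩
      have h25 : 25 * (2*(p:ℤ)) = 25 * (u^2 + 6*v^2) := by
        linear_combination (2*x-6*y+5*u)*hu + 6*(x+2*y+5*v)*hv - 10*hxy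
      linarith
  · -- k = 6
    have h2 : (2:ℤ) ∣ x := by
      refine Int.prime_two.dvd_of_dvd_pow (n := 2) ⟨3*p - 3*y^2, by linarith⟩
    obtain ⟨w, rfl⟩ := h2
    have h3 : (3:ℤ) ∣ w := by
      have h3x : (3:ℤ) ∣ 2 * (2 * w^2) := ⟨2*(p - y^2), by nlinarith⟩
      rcases (Int.prime_three.dvd_mul.mp h3x) with h | h
      · norm_num at h
      rcases (Int.prime_three.dvd_mul.mp h) with h' | h'
      · norm_num at h'
      · exact Int.prime_three.dvd_of_dvd_pow h'
    obtain ⟨v, rfl⟩ := h3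
    exact ⟨y, v, Or.inl (by nlinarith)⟩

theorem stmt_3 (a b c : ℤ) (hc : 0 < c) (h : a^2 + 6*b^2 = c^2)
    (hprim : Int.gcd a b = 1) (p : ℕ) (hp : Nat.Prime p) (hpc : (p : ℤ) ∣ c) :
    ∃ u v : ℤ, (p : ℤ) = u^2 + 6*v^2 ∨ 2*(p : ℤ) = u^2 + 6*v^2 := by
  rcases eq_or_ne p 2 with rfl | hp2
  · exact ⟨2, 0, Or.inr (by norm_num)⟩
  rcases eq_or_ne p 3 with rfl | hp3
  · exact ⟨0, 1, Or.inr (by norm_num)⟩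
  haveI := Fact.mk hp
  have hpprime : Prime (p : ℤ) := Int.prime_iff_natAbs_prime.mpr (by simpa using hp)
  have hpc2 : (p : ℤ) ∣ c^2 := Dvd.dvd.pow hpc (by norm_num)
  have hpb : ¬ (p : ℤ) ∣ b := by
    intro hb
    have hpa : (p : ℤ) ∣ a := by
      refine hpprime.dvd_of_dvd_pow (n := 2) ?_
      have ha2 : a^2 = c^2 - 6*b^2 := by linarith
      rw [ha2]
      exact dvd_sub hpc2 (Dvd.dvd.mul_left (dvd_pow hb (by norm_num)) 6)
    have hg : (p : ℤ) ∣ (Int.gcd a b : ℤ) := Int.dvd_coe_gcd hpa hb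
    rw [hprim] at hg
    have := Int.le_of_dvd one_pos hg
    have h2 := hp.two_le
    norm_cast at this
    omega
  have hb0 : (b : ZMod p) ≠ 0 := fun h0 => hpb ((ZMod.intCast_zmod_eq_zero_iff_dvd b p).mp h0)
  have hc0 : ((c : ℤ) : ZMod p) = 0 := (ZMod.intCast_zmod_eq_zero_iff_dvd c p).mpr hpc
  have ha2 : (a : ZMod p)^2 = -6 * (b : ZMod p)^2 := by
    have hcast := congrArg (fun z : ℤ => (z : ZMod p)) h
    push_cast at hcast
    linear_combination hcast + ((c : ℤ) : ZMod p) * hc0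
  have ht : ((a : ZMod p) * (b : ZMod p)⁻¹)^2 = -6 := by
    rw [mul_pow, ha2, mul_assoc, ← mul_pow, mul_inv_cancel₀ hb0, one_pow, mul_one]
  obtain ⟨x, y, hxy, hx0, hxp, hyp⟩ := thue6 p hp ((a : ZMod p) * (b : ZMod p)⁻¹)
  have hdvd : (p : ℤ) ∣ x^2 + 6*y^2 := by
    rw [← ZMod.intCast_zmod_eq_zero_iff_dvd]
    push_cast
    rw [hxy]
    linear_combination ((y : ℤ) : ZMod p)^2 * ht
  obtain ⟨k, hk⟩ := hdvd
  have hp0 : (0:ℤ) < p := by exact_mod_cast hp.pos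
  have hpos : 0 < x^2 + 6*y^2 := by
    rcases hx0 with h0 | h0
    · have hx2 : 0 < x^2 := by positivity
      linarith [sq_nonneg y]
    · have hy2 : 0 < y^2 := by positivity
      linarith [sq_nonneg x]
  have hk1 : 1 ≤ k := by nlinarith
  have hk6 : k ≤ 6 := by nlinarith
  exact descend6 p hp x y k hk1 hk6 (by linarith)
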